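/- Let n ≥ 1, let k ≤ n, and let H_1, …, H_k be closed halfspaces in ℝ^n, i.e. sets of the form {x ∈ ℝ^n : w_i·x + b_i ≥ 0} with w_i ∈ ℝ^n and b_i ∈ ℝ. Then the intersection ⋂_{i=1}^k H_i has Lebesgue measure either 0 or ∞; equivalently, if an intersection of closed halfspaces in ℝ^n has positive finite Lebesgue measure, then it involves at least n + 1 halfspaces. -/

import Mathlib

open MeasureTheory Pointwise

/-- Dot product of two vectors in ℝⁿ. -/
noncomputable def dotp {n : ℕ} (w x : Fin n → ℝ) : ℝ := ∑ i, w i * x i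

lemma dotp_add {n : ℕ} (w x y : Fin n → ℝ) : dotp w (x + y) = dotp w x + dotp w y := by
  simp [dotp, mul_add, Finset.sum_add_distrib]

lemma dotp_smul {n : ℕ} (w : Fin n → ℝ) (c : ℝ) (x : Fin n → ℝ) :
    dotp w (c • x) = c * dotp w x := by
  simp [dotp, Finset.mul_sum, mul_assoc, mul_left_comm]

lemma continuous_dotp {n : ℕ} (w : Fin n → ℝ) : Continuous fun x : Fin n → ℝ => dotp w x := by
  unfold dotp
  exact continuous_finset_sum _ fun i _ => (continuous_const.mul (continuous_apply i))

/-- Existence of a nonzero direction making all dot products nonnegative. -/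
lemma exists_good_dir (n k : ℕ) (hn : 1 ≤ n) (hk : k ≤ n) (w : Fin k → (Fin n → ℝ)) :
    ∃ v : Fin n → ℝ, v ≠ 0 ∧ ∀ i, 0 ≤ dotp (w i) v := by
  set M : Matrix (Fin k) (Fin n) ℝ := fun i j => w i j
  have hdot : ∀ (i : Fin k) (x : Fin n → ℝ), M.mulVecLin x i = dotp (w i) x := by
    intro i x
    rfl
  by_cases hinj : Function.Injective M.mulVecLin
  · -- then n ≤ k ≤ n so surjective
    have h1 : n ≤ k := by
      have := LinearMap.finrank_le_finrank_of_injective hinj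
      simpa using this
    have hnk : k = n := le_antisymm hk h1
    have hsurj : Function.Surjective M.mulVecLin := by
      have hr : Module.finrank ℝ ↥(LinearMap.range M.mulVecLin) = Module.finrank ℝ (Fin k → ℝ) := by
        rw [LinearMap.finrank_range_of_inj hinj]
        simp [hnk]
      have := Submodule.eq_top_of_finrank_eq hr
      exact LinearMap.range_eq_top.mp this
    obtain ⟨v, hv⟩ := hsurj 1
    refine ⟨v, ?_, ?_⟩
    · intro h0
      rw [h0] at hv
      have : (0 : Fin k → ℝ) = 1 := by simpa using hv
      have hk1 : 0 < k := by omega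
      have := congrFun this ⟨0, hk1⟩
      norm_num at this
    · intro i
      have : dotp (w i) v = 1 := by rw [← hdot]; rw [hv]; rfl
      rw [this]; norm_num
  · -- kernel nontrivial
    have hker : LinearMap.ker M.mulVecLin ≠ ⊥ := fun h => hinj (LinearMap.ker_eq_bot.mp h)
    obtain ⟨v, hvk, hv0⟩ := Submodule.exists_mem_ne_zero_of_ne_bot hker
    refine ⟨v, hv0, fun i => ?_⟩
    have : dotp (w i) v = 0 := by
      rw [← hdot]
      rw [LinearMap.mem_ker] at hvk
      rw [hvk]
      rfl
    rw [this]

theorem few_halfspaces_zero_or_infinite_volume (n k : ℕ) (hn : 1 ≤ n) (hk : k ≤ n)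
    (w : Fin k → (Fin n → ℝ)) (b : Fin k → ℝ) :
    volume (⋂ i, {x : Fin n → ℝ | 0 ≤ dotp (w i) x + b i}) = 0 ∨
    volume (⋂ i, {x : Fin n → ℝ | 0 ≤ dotp (w i) x + b i}) = ⊤ := by
  set S := ⋂ i, {x : Fin n → ℝ | 0 ≤ dotp (w i) x + b i} with hSdef
  by_contra hcon
  push_neg at hcon
  obtain ⟨h0, htop⟩ := hcon
  obtain ⟨v, hv0, hv⟩ := exists_good_dir n k hn hk w
  -- S is measurable
  have hSm : MeasurableSet S := by
    apply MeasurableSet.iInter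
    intro i
    exact (isClosed_le continuous_const ((continuous_dotp (w i)).add continuous_const)).measurableSet
  -- translation by t • v preserves S for t ≥ 0
  have htrans : ∀ (t : ℝ), 0 ≤ t → ∀ x ∈ S, x + t • v ∈ S := by
    intro t ht x hx
    simp only [hSdef, Set.mem_iInter, Set.mem_setOf_eq] at hx ⊢
    intro i
    have := hx i
    rw [dotp_add, dotp_smul]
    have : 0 ≤ t * dotp (w i) v := mul_nonneg ht (hv i)
    linarith [hx i]
  -- find bounded piece of positive measure
  have hU : S = ⋃ m : ℕ, S ∩ Metric.closedBall 0 m := by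
    ext x
    simp only [Set.mem_iUnion, Set.mem_inter_iff]
    constructor
    · intro hx
      obtain ⟨m, hm⟩ := exists_nat_ge ‖x‖
      exact ⟨m, hx, by simpa [Metric.mem_closedBall] using hm⟩
    · rintro ⟨m, hm, _⟩; exact hm
  have hdir : Directed (fun a b : Set (Fin n → ℝ) => a ⊆ b) (fun m : ℕ => S ∩ Metric.closedBall 0 m) := by
    intro a b
    refine ⟨max a b, ?_, ?_⟩ <;>
      exact Set.inter_subset_inter_right _ (Metric.closedBall_subset_closedBall (by
        simp [Nat.cast_le, le_max_left, le_max_right]))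
  obtain ⟨m, hm⟩ : ∃ m : ℕ, 0 < volume (S ∩ Metric.closedBall 0 m) := by
    by_contra hno
    push_neg at hno
    have : volume S = 0 := by
      rw [hU, hdir.measure_iUnion]
      simp only [nonpos_iff_eq_zero] at hno
      simp [hno]
    exact h0 this
  set A := S ∩ Metric.closedBall 0 m with hA
  have hAm : MeasurableSet A := hSm.inter Metric.isClosed_closedBall.measurableSet
  have hvnorm : (0:ℝ) < ‖v‖ := norm_pos_iff.mpr hv0
  set c : ℝ := (2 * m + 1) / ‖v‖ with hc
  have hcpos : 0 < c := by positivity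
  -- family of disjoint translates
  set f : ℕ → Set (Fin n → ℝ) := fun j => ((j : ℝ) * c) • v +ᵥ A with hf
  have hfS : ∀ j, f j ⊆ S := by
    intro j x hx
    obtain ⟨a, ha, rfl⟩ := hx
    have : a + ((j:ℝ) * c) • v ∈ S := htrans _ (by positivity) a ha.1
    simpa [add_comm] using this
  have hfm : ∀ j, MeasurableSet (f j) := fun j => hAm.const_vadd _
  have hfd : Pairwise (Function.onFun Disjoint f) := by
    intro i j hij
    simp only [Function.onFun, Set.disjoint_left]
    rintro x ⟨a, ha, rfl⟩ ⟨a', ha', heq⟩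
    -- a + i c v = a' + j c v with a, a' in ball of radius m
    have hna : ‖a‖ ≤ m := by simpa [Metric.mem_closedBall] using ha.2
    have hna' : ‖a'‖ ≤ m := by simpa [Metric.mem_closedBall] using ha'.2
    have h' : ((j:ℝ) * c) • v + a' = ((i:ℝ) * c) • v + a := by
      simpa [vadd_eq_add] using heq
    have hdiff : a - a' = (((j:ℝ) - i) * c) • v := by
      funext t
      have ht := congrFun h' t
      simp only [Pi.add_apply, Pi.smul_apply, smul_eq_mul, Pi.sub_apply] at ht ⊢
      linear_combination -ht
    have h1 : ‖a - a'‖ ≤ 2 * m := by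
      calc ‖a - a'‖ ≤ ‖a‖ + ‖a'‖ := norm_sub_le _ _
        _ ≤ 2 * m := by linarith
    have h2 : ‖a - a'‖ = |((j:ℝ) - i)| * c * ‖v‖ := by
      rw [hdiff, norm_smul]
      simp [abs_mul, abs_of_pos hcpos, mul_assoc]
    have hij1 : (1:ℝ) ≤ |((j:ℝ) - i)| := by
      rcases Nat.lt_or_ge i j with h | h
      · have h1 : (i:ℝ) + 1 ≤ j := by exact_mod_cast h
        rw [le_abs]
        left; linarith
      · have hji : j < i := lt_of_le_of_ne h (fun e => hij e.symm)
        have h1 : (j:ℝ) + 1 ≤ i := by exact_mod_cast hji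
        rw [le_abs]
        right; linarith
    have hcv : c * ‖v‖ = 2 * m + 1 := div_mul_cancel₀ _ hvnorm.ne'
    have : (2*m+1 : ℝ) ≤ ‖a - a'‖ := by
      rw [h2, mul_assoc, hcv]
      nlinarith [hij1]
    linarith
  have : volume (⋃ j, f j) = ⊤ := by
    rw [measure_iUnion hfd hfm]
    have hvol : ∀ j, volume (f j) = volume A := fun j => measure_vadd _ _ _
    simp only [hvol]
    exact ENNReal.tsum_const_eq_top_of_ne_zero hm.ne'
  have : volume S = ⊤ := top_unique (this ▸ measure_mono (Set.iUnion_subset hfS))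
  exact htop this
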